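/- arXiv:2509.10323 — 5 statements merged into one kernel-verified Lean document; each statement's English description precedes it below -/
import Mathlib

section
/- If the initial data satisfies φ_in(x,v) = v²/2 for all x∈ℝ, v∈ℝ, then the semi-discrete scheme defined by μ^{n+1}(x) = min_{j∈ℤ} φ_j^n(x−Δt·v_j) and φ_j^{n+1}(x) = min{φ_j^n(x−Δt·v_j)+Δt, v_j²/2 + μ^{n+1}(x)} (with v_j = j·Δv) preserves the equilibrium: for all n ≥ 0, all j∈ℤ, and all x∈ℝ, φ_j^n(x) = v_j²/2. -/
/-- Equilibrium preservation for the limit semi-discrete scheme. -/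
theorem limit_scheme_preserves_equilibrium
    (Δt Δv : ℝ) (hΔt : 0 < Δt) (hΔv : 0 < Δv)
    (φ : ℕ → ℤ → ℝ → ℝ) (μ : ℕ → ℝ → ℝ)
    (hμ : ∀ n x, IsLeast (Set.range fun j : ℤ => φ n j (x - Δt * ((j : ℝ) * Δv)))
        (μ (n + 1) x))
    (hφ : ∀ n j x, φ (n + 1) j x =
        min (φ n j (x - Δt * ((j : ℝ) * Δv)) + Δt)
            (((j : ℝ) * Δv) ^ 2 / 2 + μ (n + 1) x))
    (hinit : ∀ j x, φ 0 j x = ((j : ℝ) * Δv) ^ 2 / 2) :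
    ∀ n j x, φ n j x = ((j : ℝ) * Δv) ^ 2 / 2 := by
  intro n
  induction n with
  | zero => exact hinit
  | succ n ih =>
    intro j x
    -- μ (n+1) x = 0
    have hμ0 : μ (n + 1) x = 0 := by
      obtain ⟨hmem, hlb⟩ := hμ n x
      have h0 : (0 : ℝ) ∈ Set.range fun j : ℤ => φ n j (x - Δt * ((j : ℝ) * Δv)) := by
        refine ⟨0, ?_⟩
        simp only [ih]; norm_num
      have hle : μ (n + 1) x ≤ 0 := hlb h0
      obtain ⟨k, hk⟩ := hmem
      have : μ (n + 1) x = ((k : ℝ) * Δv) ^ 2 / 2 := by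
        simp only [← hk]; exact ih k _
      nlinarith [sq_nonneg ((k : ℝ) * Δv)]
    rw [hφ n j x, ih j, hμ0]
    have : ((j : ℝ) * Δv) ^ 2 / 2 + 0 ≤ ((j : ℝ) * Δv) ^ 2 / 2 + Δt := by linarith
    rw [min_eq_right this]
    ring
end

section
/- Assume the CFL-type condition Δt ≤ Δv²/2. Then for any solution (μ^n, φ_j^n) of the limit semi-discrete scheme, the discrete velocity-minimum is nonincreasing in time: for all x∈ℝ and all n ≥ 0, μ^{n+1}(x) − μ^n(x) ≤ 0. -/
/-- Under the CFL condition Δt ≤ Δv²/2, the discrete velocity-minimum is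
nonincreasing in time. -/
theorem limit_scheme_min_decreasing
    (Δt Δv M : ℝ) (hΔt : 0 < Δt) (hΔv : 0 < Δv) (hM : 0 < M)
    (hCFL : Δt ≤ Δv ^ 2 / 2)
    (φ : ℕ → ℤ → ℝ → ℝ) (μ : ℕ → ℝ → ℝ)
    (hbφ : ∀ j x, |φ 0 j x - ((j : ℝ) * Δv) ^ 2 / 2| ≤ M)
    (hμ0 : ∀ x, IsLeast (Set.range fun j : ℤ => φ 0 j (x - Δt * ((j : ℝ) * Δv)))
        (μ 0 x))
    (hμ : ∀ n x, IsLeast (Set.range fun j : ℤ => φ n j (x - Δt * ((j : ℝ) * Δv)))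
        (μ (n + 1) x))
    (hφ : ∀ n j x, φ (n + 1) j x =
        min (φ n j (x - Δt * ((j : ℝ) * Δv)) + Δt)
            (((j : ℝ) * Δv) ^ 2 / 2 + μ (n + 1) x)) :
    ∀ x, ∀ n : ℕ, μ (n + 1) x - μ n x ≤ 0 := by
  intro x n
  cases n with
  | zero =>
    have h1 := hμ0 x
    have h2 := hμ 0 x
    have a := h1.2 h2.1
    have b := h2.2 h1.1
    linarith
  | succ m =>
    have hmem : φ (m + 1) 0 (x - Δt * (((0 : ℤ) : ℝ) * Δv)) ∈
        Set.range fun j : ℤ => φ (m + 1) j (x - Δt * ((j : ℝ) * Δv)) := ⟨0, rfl⟩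
    have h1 := (hμ (m + 1) x).2 hmem
    have h2 := hφ m 0 (x - Δt * (((0 : ℤ) : ℝ) * Δv))
    have h3 : φ (m + 1) 0 (x - Δt * (((0 : ℤ) : ℝ) * Δv)) ≤
        (((0 : ℤ) : ℝ) * Δv) ^ 2 / 2 + μ (m + 1) (x - Δt * (((0 : ℤ) : ℝ) * Δv)) := by
      rw [h2]; exact min_le_right _ _
    simp only [Int.cast_zero, zero_mul, mul_zero, sub_zero, ne_eq, zero_pow, zero_div,
      zero_add] at h1 h3
    linarith
end

section
/- Maximum principle for the ε-scheme: let ε > 0 and suppose (φ_j^{ε,n}, μ^{ε,n}) solve the semi-discrete scheme μ^{ε,n+1}(x) = −ε ln⟨e^{−φ_j^{ε,n}(x−Δt v_j)/ε}⟩_Δv and e^{−φ_j^{ε,n+1}(x)/ε} = e^{−φ_j^{ε,n}(x−Δt v_j)/ε} e^{−Δt/ε} + (1 − e^{−Δt/ε}) (1/c_Δv^ε) e^{−v_j²/(2ε)} e^{−μ^{ε,n+1}(x)/ε}, where c_Δv^ε = Σ_j e^{−v_j²/(2ε)} Δv. If |φ_j^{ε,0}(x) − v_j²/2| ≤ M for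 all j, x, then for all n ≥ 0: |φ_j^{ε,n}(x) − v_j²/2| ≤ M and |μ^{ε,n}(x) + ε ln(c_Δv^ε)| ≤ M. -/
/-- Maximum principle for the ε-scheme: the bounds
`|φ_j^{ε,n} - v_j²/2| ≤ M` and `|μ^{ε,n} + ε ln c_Δv^ε| ≤ M` propagate. -/
theorem eps_scheme_maximum_principle
    (Δt Δv ε M : ℝ) (hΔt : 0 < Δt) (hΔv : 0 < Δv) (hε : 0 < ε) (hM : 0 < M)
    (c : ℝ) (hc : c = ∑' j : ℤ, Real.exp (-((j : ℝ) * Δv) ^ 2 / (2 * ε)) * Δv)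
    (φ : ℕ → ℤ → ℝ → ℝ) (μ : ℕ → ℝ → ℝ)
    (hμ : ∀ n x, Real.exp (-(μ (n + 1) x) / ε) =
        ∑' j : ℤ, Real.exp (-(φ n j (x - Δt * ((j : ℝ) * Δv))) / ε) * Δv)
    (hφ : ∀ n j x, Real.exp (-(φ (n + 1) j x) / ε) =
        Real.exp (-(φ n j (x - Δt * ((j : ℝ) * Δv))) / ε) * Real.exp (-Δt / ε)
        + (1 - Real.exp (-Δt / ε)) * (1 / c)
          * Real.exp (-((j : ℝ) * Δv) ^ 2 / (2 * ε))
          * Real.exp (-(μ (n + 1) x) / ε))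
    (hinit : ∀ j x, |φ 0 j x - ((j : ℝ) * Δv) ^ 2 / 2| ≤ M) :
    (∀ n j x, |φ n j x - ((j : ℝ) * Δv) ^ 2 / 2| ≤ M) ∧
    (∀ n x, |μ (n + 1) x + ε * Real.log c| ≤ M) := by
  have hεne : ε ≠ 0 := ne_of_gt hε
  -- exponent algebra
  have hE1 : ∀ b : ℝ, Real.exp (-M / ε) * Real.exp (-b ^ 2 / (2 * ε))
      = Real.exp (-(b ^ 2 / 2 + M) / ε) := by
    intro b; rw [← Real.exp_add]; congr 1; field_simp; ring
  have hE2 : ∀ b : ℝ, Real.exp (M / ε) * Real.exp (-b ^ 2 / (2 * ε))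
      = Real.exp (-(b ^ 2 / 2 - M) / ε) := by
    intro b; rw [← Real.exp_add]; congr 1; field_simp; ring
  -- monotone comparison
  have key : ∀ a b : ℝ, |a - b ^ 2 / 2| ≤ M →
      Real.exp (-(b ^ 2 / 2 + M) / ε) ≤ Real.exp (-a / ε) ∧
      Real.exp (-a / ε) ≤ Real.exp (-(b ^ 2 / 2 - M) / ε) := by
    intro a b hab
    rw [abs_le] at hab
    constructor
    · exact Real.exp_le_exp.2 ((div_le_div_iff_of_pos_right hε).2 (by linarith))
    · exact Real.exp_le_exp.2 ((div_le_div_iff_of_pos_right hε).2 (by linarith))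
  -- summability of each layer, forced by positivity of exp
  have hfs : ∀ n x, Summable (fun j : ℤ =>
      Real.exp (-(φ n j (x - Δt * ((j : ℝ) * Δv))) / ε) * Δv) := by
    intro n x
    by_contra h
    have h0 := hμ n x
    rw [tsum_eq_zero_of_not_summable h] at h0
    exact absurd h0 (Real.exp_pos _).ne'
  -- summability of the Gaussian weights
  have hgs : Summable (fun j : ℤ => Real.exp (-((j : ℝ) * Δv) ^ 2 / (2 * ε)) * Δv) := by
    refine Summable.of_nonneg_of_le (fun j => by positivity) ?_
      ((hfs 0 0).mul_left (Real.exp (M / ε)))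
    intro j
    have h1 := (key _ _ (hinit j ((0 : ℝ) - Δt * ((j : ℝ) * Δv)))).1
    have h2 : Real.exp (-((j : ℝ) * Δv) ^ 2 / (2 * ε))
        = Real.exp (M / ε) * Real.exp (-(((j : ℝ) * Δv) ^ 2 / 2 + M) / ε) := by
      rw [← Real.exp_add]; congr 1; field_simp; ring
    calc Real.exp (-((j : ℝ) * Δv) ^ 2 / (2 * ε)) * Δv
        = Real.exp (M / ε) * (Real.exp (-(((j : ℝ) * Δv) ^ 2 / 2 + M) / ε) * Δv) := by
          rw [h2]; ring
      _ ≤ Real.exp (M / ε) *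
          (Real.exp (-(φ 0 j ((0 : ℝ) - Δt * ((j : ℝ) * Δv))) / ε) * Δv) := by
          apply mul_le_mul_of_nonneg_left _ (Real.exp_pos _).le
          exact mul_le_mul_of_nonneg_right h1 hΔv.le
  have hcpos : 0 < c := by
    rw [hc]
    exact Summable.tsum_pos hgs (fun j => by positivity) 0 (by positivity)
  -- bounds on exp(-μ/ε) from the inductive hypothesis at level n
  have μstep : ∀ n, (∀ j x, |φ n j x - ((j : ℝ) * Δv) ^ 2 / 2| ≤ M) → ∀ x,
      Real.exp (-M / ε) * c ≤ Real.exp (-(μ (n + 1) x) / ε) ∧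
      Real.exp (-(μ (n + 1) x) / ε) ≤ Real.exp (M / ε) * c := by
    intro n ih x
    have hlow : ∀ j : ℤ, Real.exp (-M / ε) * (Real.exp (-((j : ℝ) * Δv) ^ 2 / (2 * ε)) * Δv)
        ≤ Real.exp (-(φ n j (x - Δt * ((j : ℝ) * Δv))) / ε) * Δv := by
      intro j
      have h1 := (key _ _ (ih j (x - Δt * ((j : ℝ) * Δv)))).1
      calc Real.exp (-M / ε) * (Real.exp (-((j : ℝ) * Δv) ^ 2 / (2 * ε)) * Δv)
          = Real.exp (-(((j : ℝ) * Δv) ^ 2 / 2 + M) / ε) * Δv := by rw [← hE1]; ring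
        _ ≤ _ := mul_le_mul_of_nonneg_right h1 hΔv.le
    have hhigh : ∀ j : ℤ, Real.exp (-(φ n j (x - Δt * ((j : ℝ) * Δv))) / ε) * Δv
        ≤ Real.exp (M / ε) * (Real.exp (-((j : ℝ) * Δv) ^ 2 / (2 * ε)) * Δv) := by
      intro j
      have h1 := (key _ _ (ih j (x - Δt * ((j : ℝ) * Δv)))).2
      calc Real.exp (-(φ n j (x - Δt * ((j : ℝ) * Δv))) / ε) * Δv
          ≤ Real.exp (-(((j : ℝ) * Δv) ^ 2 / 2 - M) / ε) * Δv :=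
            mul_le_mul_of_nonneg_right h1 hΔv.le
        _ = Real.exp (M / ε) * (Real.exp (-((j : ℝ) * Δv) ^ 2 / (2 * ε)) * Δv) := by
            rw [← hE2]; ring
    constructor
    · rw [hμ n x, hc, ← tsum_mul_left]
      exact Summable.tsum_le_tsum hlow (hgs.mul_left _) (hfs n x)
    · rw [hμ n x, hc, ← tsum_mul_left]
      exact Summable.tsum_le_tsum hhigh (hfs n x) (hgs.mul_left _)
  -- propagation of the φ bound
  have φstep : ∀ n, (∀ j x, |φ n j x - ((j : ℝ) * Δv) ^ 2 / 2| ≤ M) →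
      ∀ j x, |φ (n + 1) j x - ((j : ℝ) * Δv) ^ 2 / 2| ≤ M := by
    intro n ih j x
    obtain ⟨hml, hmh⟩ := μstep n ih x
    have hθ0 : (0 : ℝ) < Real.exp (-Δt / ε) := Real.exp_pos _
    have hθ1 : Real.exp (-Δt / ε) < 1 :=
      Real.exp_lt_one_iff.2 (by apply div_neg_of_neg_of_pos <;> linarith)
    obtain ⟨hAL, hAU⟩ := key _ _ (ih j (x - Δt * ((j : ℝ) * Δv)))
    -- bounds for the B-term
    have hBL : Real.exp (-(((j : ℝ) * Δv) ^ 2 / 2 + M) / ε)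
        ≤ (1 / c) * Real.exp (-((j : ℝ) * Δv) ^ 2 / (2 * ε)) * Real.exp (-(μ (n + 1) x) / ε) := by
      have h1 : (1 / c) * Real.exp (-((j : ℝ) * Δv) ^ 2 / (2 * ε)) * (Real.exp (-M / ε) * c)
          = Real.exp (-(((j : ℝ) * Δv) ^ 2 / 2 + M) / ε) := by
        rw [← hE1]; field_simp
      rw [← h1]
      apply mul_le_mul_of_nonneg_left hml (by positivity)
    have hBU : (1 / c) * Real.exp (-((j : ℝ) * Δv) ^ 2 / (2 * ε)) * Real.exp (-(μ (n + 1) x) / ε)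
        ≤ Real.exp (-(((j : ℝ) * Δv) ^ 2 / 2 - M) / ε) := by
      have h1 : (1 / c) * Real.exp (-((j : ℝ) * Δv) ^ 2 / (2 * ε)) * (Real.exp (M / ε) * c)
          = Real.exp (-(((j : ℝ) * Δv) ^ 2 / 2 - M) / ε) := by
        rw [← hE2]; field_simp
      rw [← h1]
      apply mul_le_mul_of_nonneg_left hmh (by positivity)
    have hrec := hφ n j x
    have hL : Real.exp (-(((j : ℝ) * Δv) ^ 2 / 2 + M) / ε)
        ≤ Real.exp (-(φ (n + 1) j x) / ε) := by
      rw [hrec]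
      nlinarith [mul_le_mul_of_nonneg_right hAL hθ0.le,
        mul_le_mul_of_nonneg_left hBL (sub_nonneg.2 hθ1.le)]
    have hU : Real.exp (-(φ (n + 1) j x) / ε)
        ≤ Real.exp (-(((j : ℝ) * Δv) ^ 2 / 2 - M) / ε) := by
      rw [hrec]
      nlinarith [mul_le_mul_of_nonneg_right hAU hθ0.le,
        mul_le_mul_of_nonneg_left hBU (sub_nonneg.2 hθ1.le)]
    have h1 := (div_le_div_iff_of_pos_right hε).1 (Real.exp_le_exp.1 hL)
    have h2 := (div_le_div_iff_of_pos_right hε).1 (Real.exp_le_exp.1 hU)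
    rw [abs_le]; constructor <;> linarith
  have main : ∀ n j x, |φ n j x - ((j : ℝ) * Δv) ^ 2 / 2| ≤ M := by
    intro n
    induction n with
    | zero => exact hinit
    | succ n ih => exact φstep n ih
  refine ⟨main, fun n x => ?_⟩
  obtain ⟨hml, hmh⟩ := μstep n (main n) x
  have hlogl : -M / ε + Real.log c ≤ -(μ (n + 1) x) / ε := by
    have := Real.log_le_log (by positivity) hml
    rwa [Real.log_mul (Real.exp_ne_zero _) hcpos.ne', Real.log_exp, Real.log_exp] at this
  have hlogh : -(μ (n + 1) x) / ε ≤ M / ε + Real.log c := by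
    have := Real.log_le_log (Real.exp_pos _) hmh
    rwa [Real.log_mul (Real.exp_ne_zero _) hcpos.ne', Real.log_exp, Real.log_exp] at this
  have h1 := mul_le_mul_of_nonneg_right hlogl hε.le
  have h2 := mul_le_mul_of_nonneg_right hlogh hε.le
  rw [add_mul, div_mul_cancel₀ _ hεne] at h1 h2
  rw [div_mul_cancel₀ _ hεne] at h1 h2
  rw [abs_le]; constructor <;> nlinarith
end

section
/- Monotonicity of the ε-scheme: let ε > 0 and let (φ_j^{ε,n}), (ψ_j^{ε,n}) be two solutions of the semi-discrete scheme e^{−φ_j^{ε,n+1}(x)/ε} = e^{−φ_j^{ε,n}(x−Δt v_j)/ε} e^{−Δt/ε} + (1 − e^{−Δt/ε})(1/c_Δv^ε) e^{−v_j²/(2ε)} ⟨e^{−φ_k^{ε,n}(x−Δt v_k)/ε}⟩_Δv. If φ_j^{ε,0}(x) ≤ ψ_j^{ε,0}(x) for all j, x, then φ_j^{ε,n}(x) ≤ ψ_j^{ε,n}(x) for all n ≥ 0, j∈ℤ, x∈ℝ. -/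
open Real

lemma gauss_summable (Δv ε : ℝ) (hΔv : 0 < Δv) (hε : 0 < ε) :
    Summable fun k : ℤ => Real.exp (-((k : ℝ) * Δv) ^ 2 / (2 * ε)) := by
  have key : Summable fun n : ℕ => Real.exp (-((n : ℝ) * Δv) ^ 2 / (2 * ε)) := by
    have hr1 : Real.exp (-(Δv ^ 2 / (2 * ε))) < 1 := by
      rw [Real.exp_lt_one_iff]
      have : 0 < Δv ^ 2 / (2 * ε) := by positivity
      linarith
    apply Summable.of_nonneg_of_le (fun n => (Real.exp_pos _).le)
      (fun n => ?_) (summable_geometric_of_lt_one (Real.exp_pos _).le hr1)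
    rw [← Real.exp_nat_mul]
    apply Real.exp_le_exp.2
    have hn : (n : ℝ) ≤ (n : ℝ) ^ 2 := by
      have := Nat.le_self_pow (two_ne_zero) n
      exact_mod_cast this
    have e1 : (n : ℝ) * -(Δv ^ 2 / (2 * ε)) = -((n : ℝ) * Δv ^ 2) / (2 * ε) := by ring
    rw [e1, mul_pow, neg_div, neg_div, neg_le_neg_iff]
    gcongr
  apply Summable.of_nat_of_neg <;> simpa using key

lemma phi_summable (Δt Δv ε M : ℝ) (hΔv : 0 < Δv) (hε : 0 < ε)
    (f : ℤ → ℝ → ℝ) (hb : ∀ j x, |f j x - ((j : ℝ) * Δv) ^ 2 / 2| ≤ M) (x : ℝ) :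
    Summable fun k : ℤ => Real.exp (-(f k (x - Δt * ((k : ℝ) * Δv))) / ε) * Δv := by
  apply Summable.mul_right
  apply Summable.of_nonneg_of_le (fun k => (Real.exp_pos _).le) (fun k => ?_)
    (((gauss_summable Δv ε hΔv hε).mul_left (Real.exp (M / ε))))
  rw [← Real.exp_add]
  apply Real.exp_le_exp.2
  have h := (abs_le.1 (hb k (x - Δt * ((k : ℝ) * Δv)))).1
  rw [div_add_div _ _ (ne_of_gt hε) (by positivity : (2 * ε) ≠ 0)]
  rw [div_le_div_iff₀ hε (by positivity)]
  nlinarith [mul_le_mul_of_nonneg_right h (sq_nonneg ε), sq_nonneg ε, hε.le,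
    sq_nonneg ((k : ℝ) * Δv)]

/-- Monotonicity of the ε-scheme: ordering of initial data propagates. -/
theorem eps_scheme_monotone
    (Δt Δv ε M : ℝ) (hΔt : 0 < Δt) (hΔv : 0 < Δv) (hε : 0 < ε) (hM : 0 < M)
    (c : ℝ) (hc : c = ∑' j : ℤ, Real.exp (-((j : ℝ) * Δv) ^ 2 / (2 * ε)) * Δv)
    (φ ψ : ℕ → ℤ → ℝ → ℝ)
    (hbφ : ∀ n j x, |φ n j x - ((j : ℝ) * Δv) ^ 2 / 2| ≤ M)
    (hbψ : ∀ n j x, |ψ n j x - ((j : ℝ) * Δv) ^ 2 / 2| ≤ M)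
    (hφ : ∀ n j x, Real.exp (-(φ (n + 1) j x) / ε) =
        Real.exp (-(φ n j (x - Δt * ((j : ℝ) * Δv))) / ε) * Real.exp (-Δt / ε)
        + (1 - Real.exp (-Δt / ε)) * (1 / c)
          * Real.exp (-((j : ℝ) * Δv) ^ 2 / (2 * ε))
          * ∑' k : ℤ, Real.exp (-(φ n k (x - Δt * ((k : ℝ) * Δv))) / ε) * Δv)
    (hψ : ∀ n j x, Real.exp (-(ψ (n + 1) j x) / ε) =
        Real.exp (-(ψ n j (x - Δt * ((j : ℝ) * Δv))) / ε) * Real.exp (-Δt / ε)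
        + (1 - Real.exp (-Δt / ε)) * (1 / c)
          * Real.exp (-((j : ℝ) * Δv) ^ 2 / (2 * ε))
          * ∑' k : ℤ, Real.exp (-(ψ n k (x - Δt * ((k : ℝ) * Δv))) / ε) * Δv)
    (hinit : ∀ j x, φ 0 j x ≤ ψ 0 j x) :
    ∀ n j x, φ n j x ≤ ψ n j x := by
  have hcnn : 0 ≤ c := hc ▸ tsum_nonneg fun j => by positivity
  have hcoef : 0 ≤ 1 - Real.exp (-Δt / ε) := by
    have : Real.exp (-Δt / ε) ≤ 1 := by
      rw [Real.exp_le_one_iff, neg_div]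
      exact neg_nonpos_of_nonneg (by positivity)
    linarith
  have hdiv : ∀ a b : ℝ, a ≤ b → -b / ε ≤ -a / ε := fun a b h => by
    rw [div_le_div_iff₀ hε hε]; nlinarith
  intro n
  induction n with
  | zero => exact hinit
  | succ n ih =>
    intro j x
    have key : Real.exp (-(ψ (n + 1) j x) / ε) ≤ Real.exp (-(φ (n + 1) j x) / ε) := by
      rw [hφ n j x, hψ n j x]
      apply add_le_add
      · exact mul_le_mul_of_nonneg_right
          (Real.exp_le_exp.2 (hdiv _ _ (ih j _))) (Real.exp_pos _).le
      · apply mul_le_mul_of_nonneg_left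
        · apply Summable.tsum_le_tsum _ (phi_summable Δt Δv ε M hΔv hε (ψ n) (hbψ n) x)
            (phi_summable Δt Δv ε M hΔv hε (φ n) (hbφ n) x)
          intro k
          exact mul_le_mul_of_nonneg_right
            (Real.exp_le_exp.2 (hdiv _ _ (ih k _))) hΔv.le
        · exact mul_nonneg (mul_nonneg hcoef (one_div_nonneg.2 hcnn)) (Real.exp_pos _).le
    have h2 := (div_le_div_iff₀ hε hε).1 (Real.exp_le_exp.1 key)
    nlinarith
end

section
/- Interpolation error propagation (one step of the fully discrete scheme): suppose for all i,j∈ℤ the errors e_{φ,ij}^n = φ_j^n(x_i) − φ_{ij}^n satisfy |e_{φ,ij}^n| ≤ E_n, the semi-discrete solution x ↦ φ_j^n(x) is L-Lipschitz for each j, and the fully discrete update uses the monotone linear interpolation φ̄_{i_j,j}^n = α_j φ_{i_j,j}^n + (1−α_j) φ_{i_j−1,j}^n with α_j ∈ [0,1], i_j = i − ⌊v_j Δt/Δx⌋, α_j = v_j Δt/Δx − ⌊v_j Δt/Δx⌋. Then the updated errors satisfy |μ^{n+1}(x_i) − μ_i^{n+1}| ≤ E_n + 2LΔx and |φ_j^{n+1}(x_i)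 − φ_{ij}^{n+1}| ≤ E_n + 2LΔx, where μ_i^{n+1} = min_j φ̄_{i_j,j}^n and φ_{ij}^{n+1} = min{φ̄_{i_j,j}^n + Δt, v_j²/2 + μ_i^{n+1}}, and analogously for the semi-discrete quantities with exact transport. Consequently, by induction, after n steps the errors are bounded by 2LnΔx. -/
/-- One-step interpolation-error propagation for the fully discrete scheme:
if the current errors are bounded by `E` and the semi-discrete solution is
`L`-Lipschitz in `x`, then after one step of the scheme (with monotone linear
interpolation at the feet of the characteristics) the errors are bounded by
`E + 2LΔx`. -/
theorem interpolation_error_propagation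
    (Δt Δv Δx L E : ℝ) (hΔt : 0 < Δt) (hΔv : 0 < Δv) (hΔx : 0 < Δx)
    (hL : 0 ≤ L) (hE : 0 ≤ E)
    (φ : ℤ → ℝ → ℝ) (φd : ℤ → ℤ → ℝ) (μn : ℝ → ℝ) (μd : ℤ → ℝ)
    (β : ℤ → ℤ) (α : ℤ → ℝ) (φbar : ℤ → ℤ → ℝ)
    (hβ : ∀ j : ℤ, β j = ⌊(j : ℝ) * Δv * Δt / Δx⌋)
    (hα : ∀ j : ℤ, α j = (j : ℝ) * Δv * Δt / Δx - ((β j : ℝ)))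
    (hbar : ∀ i j : ℤ, φbar i j =
        α j * φd (i - β j) j + (1 - α j) * φd (i - β j - 1) j)
    (herr : ∀ i j : ℤ, |φ j ((i : ℝ) * Δx) - φd i j| ≤ E)
    (hlip : ∀ (j : ℤ) (x y : ℝ), |φ j x - φ j y| ≤ L * |x - y|)
    (hμn : ∀ x : ℝ, IsLeast
        (Set.range fun j : ℤ => φ j (x - Δt * ((j : ℝ) * Δv))) (μn x))
    (hμd : ∀ i : ℤ, IsLeast (Set.range fun j : ℤ => φbar i j) (μd i)) :
    (∀ i : ℤ, |μn ((i : ℝ) * Δx) - μd i| ≤ E + 2 * L * Δx) ∧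
    (∀ i j : ℤ,
      |min (φ j ((i : ℝ) * Δx - Δt * ((j : ℝ) * Δv)) + Δt)
          (((j : ℝ) * Δv) ^ 2 / 2 + μn ((i : ℝ) * Δx))
        - min (φbar i j + Δt) (((j : ℝ) * Δv) ^ 2 / 2 + μd i)|
        ≤ E + 2 * L * Δx) := by
  -- key pointwise estimate
  have key : ∀ i j : ℤ,
      |φ j ((i : ℝ) * Δx - Δt * ((j : ℝ) * Δv)) - φbar i j| ≤ E + 2 * L * Δx := by
    intro i j
    set a := α j with ha'
    have ha0 : 0 ≤ a := by
      rw [ha', hα, hβ]; have := Int.floor_le ((j : ℝ) * Δv * Δt / Δx); linarith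
    have ha1 : a ≤ 1 := by
      rw [ha', hα, hβ]
      have := Int.lt_floor_add_one ((j : ℝ) * Δv * Δt / Δx); linarith
    have hfoot : (i : ℝ) * Δx - Δt * ((j : ℝ) * Δv)
        = ((i - β j : ℤ) : ℝ) * Δx - a * Δx := by
      have hs : (j : ℝ) * Δv * Δt / Δx = (β j : ℝ) + a := by
        rw [ha', hα]; ring
      have : (j : ℝ) * Δv * Δt = ((β j : ℝ) + a) * Δx := by
        field_simp at hs; linarith [hs]
      push_cast
      nlinarith [this]
    set x₁ := ((i - β j : ℤ) : ℝ) * Δx with hx1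
    set x₀ := ((i - β j - 1 : ℤ) : ℝ) * Δx with hx0
    have hx01 : x₀ = x₁ - Δx := by rw [hx0, hx1]; push_cast; ring
    set z := (i : ℝ) * Δx - Δt * ((j : ℝ) * Δv) with hz
    -- interpolation of exact values
    have h1 : |φ j z - (a * φ j x₁ + (1 - a) * φ j x₀)| ≤ 2 * L * Δx := by
      have e1 : |φ j z - φ j x₁| ≤ L * (a * Δx) := by
        have := hlip j z x₁
        have : |φ j z - φ j x₁| ≤ L * |z - x₁| := this
        have hzx : |z - x₁| = a * Δx := by
          rw [hfoot]
          rw [show x₁ - a * Δx - x₁ = -(a * Δx) by ring, abs_neg,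
            abs_of_nonneg (by positivity)]
        rw [hzx] at this; exact this
      have e0 : |φ j z - φ j x₀| ≤ L * ((1 - a) * Δx + a * Δx) := by
        have h := hlip j z x₀
        have hzx : |z - x₀| ≤ (1 - a) * Δx + a * Δx := by
          rw [hfoot, hx01]
          rw [show x₁ - a * Δx - (x₁ - Δx) = (1 - a) * Δx by ring,
            abs_of_nonneg (by nlinarith)]
          nlinarith
        calc |φ j z - φ j x₀| ≤ L * |z - x₀| := h
          _ ≤ L * ((1 - a) * Δx + a * Δx) := by
              exact mul_le_mul_of_nonneg_left hzx hL
      have expand : φ j z - (a * φ j x₁ + (1 - a) * φ j x₀)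
          = a * (φ j z - φ j x₁) + (1 - a) * (φ j z - φ j x₀) := by ring
      rw [expand]
      calc |a * (φ j z - φ j x₁) + (1 - a) * (φ j z - φ j x₀)|
          ≤ |a * (φ j z - φ j x₁)| + |(1 - a) * (φ j z - φ j x₀)| := abs_add_le _ _
        _ = a * |φ j z - φ j x₁| + (1 - a) * |φ j z - φ j x₀| := by
            rw [abs_mul, abs_mul, abs_of_nonneg ha0,
              abs_of_nonneg (show (0:ℝ) ≤ 1 - a by linarith)]
        _ ≤ a * (L * (a * Δx)) + (1 - a) * (L * ((1 - a) * Δx + a * Δx)) :=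
            add_le_add (mul_le_mul_of_nonneg_left e1 ha0)
              (mul_le_mul_of_nonneg_left e0 (by linarith))
        _ ≤ 2 * L * Δx := by
            nlinarith [mul_nonneg hL hΔx.le,
              mul_nonneg (mul_nonneg hL hΔx.le) (mul_nonneg ha0 (sub_nonneg.2 ha1))]
    have h2 : |(a * φ j x₁ + (1 - a) * φ j x₀) - φbar i j| ≤ E := by
      rw [hbar]
      have e1 := herr (i - β j) j
      have e0 := herr (i - β j - 1) j
      rw [hx1] at *; rw [hx0] at *
      calc |a * φ j (((i - β j : ℤ) : ℝ) * Δx) + (1 - a) * φ j (((i - β j - 1 : ℤ) : ℝ) * Δx)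
            - (α j * φd (i - β j) j + (1 - α j) * φd (i - β j - 1) j)|
          = |a * (φ j (((i - β j : ℤ) : ℝ) * Δx) - φd (i - β j) j)
              + (1 - a) * (φ j (((i - β j - 1 : ℤ) : ℝ) * Δx) - φd (i - β j - 1) j)| := by
            rw [← ha']; ring_nf
        _ ≤ a * |φ j (((i - β j : ℤ) : ℝ) * Δx) - φd (i - β j) j|
              + (1 - a) * |φ j (((i - β j - 1 : ℤ) : ℝ) * Δx) - φd (i - β j - 1) j| := by
            refine (abs_add_le _ _).trans ?_
            rw [abs_mul, abs_mul, abs_of_nonneg ha0,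
              abs_of_nonneg (show (0:ℝ) ≤ 1 - a by linarith)]
        _ ≤ a * E + (1 - a) * E :=
            add_le_add (mul_le_mul_of_nonneg_left e1 ha0)
              (mul_le_mul_of_nonneg_left e0 (by linarith))
        _ = E := by ring
    calc |φ j z - φbar i j|
        = |(φ j z - (a * φ j x₁ + (1 - a) * φ j x₀))
            + ((a * φ j x₁ + (1 - a) * φ j x₀) - φbar i j)| := by ring_nf
      _ ≤ _ + _ := abs_add_le _ _
      _ ≤ 2 * L * Δx + E := add_le_add h1 h2
      _ = E + 2 * L * Δx := by ring
  -- μ error bound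
  have μbound : ∀ i : ℤ, |μn ((i : ℝ) * Δx) - μd i| ≤ E + 2 * L * Δx := by
    intro i
    obtain ⟨⟨jn, hjn⟩, hnlb⟩ := hμn ((i : ℝ) * Δx)
    obtain ⟨⟨jd, hjd⟩, hdlb⟩ := hμd i
    rw [abs_le]
    constructor
    · -- μd i - μn ≤ bound : μd i ≤ φbar i jn ≤ φ jn foot + bound = μn + bound
      have h1 : μd i ≤ φbar i jn := hdlb ⟨jn, rfl⟩
      have h2 := abs_le.mp (key i jn)
      simp only at hjn
      linarith [h2.1, h2.2]
    · have h1 : μn ((i : ℝ) * Δx) ≤ φ jd ((i : ℝ) * Δx - Δt * ((jd : ℝ) * Δv)) :=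
        hnlb ⟨jd, rfl⟩
      have h2 := abs_le.mp (key i jd)
      simp only at hjd
      linarith [h2.1, h2.2]
  refine ⟨μbound, fun i j => ?_⟩
  refine (abs_min_sub_min_le_max _ _ _ _).trans (max_le ?_ ?_)
  · have := key i j
    calc |φ j ((i : ℝ) * Δx - Δt * ((j : ℝ) * Δv)) + Δt - (φbar i j + Δt)|
        = |φ j ((i : ℝ) * Δx - Δt * ((j : ℝ) * Δv)) - φbar i j| := by ring_nf
      _ ≤ E + 2 * L * Δx := this
  · have := μbound i
    calc |((j : ℝ) * Δv) ^ 2 / 2 + μn ((i : ℝ) * Δx) - (((j : ℝ) * Δv) ^ 2 / 2 + μd i)|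
        = |μn ((i : ℝ) * Δx) - μd i| := by ring_nf
      _ ≤ E + 2 * L * Δx := this
end
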